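/- The endomorphism K satisfies K∘K = -id and N_K(a,b) := [Ka, Kb]▷ - K[Ka, b]▷ - K[a, Kb]▷ + K(K([a, b]▷)) = 0 for all a, b in g ⊕ g* if and only if the triple (J, R, σ) satisfies conditions (C0), (C1), (C2), (C3) and (C4). -/

import Mathlib

open Module LinearMap

variable {g : Type*} [LieRing g] [LieAlgebra ℝ g]

/-- The coadjoint action: `(coad u α) v = -α ⁅u, v⁆`. -/
noncomputable def coad (u : g) (α : Module.Dual ℝ g) : Module.Dual ℝ g :=
  -(α ∘ₗ (LieAlgebra.ad ℝ g u : g →ₗ[ℝ] g))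

/-- The bracket `⁅u + α, v + β⁆▷ = ⁅u, v⁆ + ad*_u β - ad*_v α` on `g ⊕ g*`. -/
noncomputable def dbracket (a b : g × Module.Dual ℝ g) : g × Module.Dual ℝ g :=
  (⁅a.1, b.1⁆, coad a.1 b.2 - coad b.1 a.2)

/-- The neutral pairing `⟨u + α, v + β⟩ = (α v + β u)/2` on `g ⊕ g*`. -/
noncomputable def pairing (a b : g × Module.Dual ℝ g) : ℝ :=
  (a.2 b.1 + b.2 a.1) / 2

/-- `dτ(u,v,w) = -τ(⁅u,v⁆,w) + τ(⁅u,w⁆,v) - τ(⁅v,w⁆,u)`. -/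
noncomputable def dForm (τ : g → g → ℝ) (u v w : g) : ℝ :=
  -τ ⁅u, v⁆ w + τ ⁅u, w⁆ v - τ ⁅v, w⁆ u

/-- The linear functional `w ↦ dσ^b(u,v,w)`. -/
noncomputable def dSigma (σ : g →ₗ[ℝ] Module.Dual ℝ g) (u v : g) : Module.Dual ℝ g :=
  -σ ⁅u, v⁆ + (σ.flip v) ∘ₗ (LieAlgebra.ad ℝ g u : g →ₗ[ℝ] g)
    - (σ.flip u) ∘ₗ (LieAlgebra.ad ℝ g v : g →ₗ[ℝ] g)

/-- A generalized complex structure on a Lie algebra `g`. -/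
structure IsGCS (J : g →ₗ[ℝ] g) (R : Module.Dual ℝ g →ₗ[ℝ] g)
    (σ : g →ₗ[ℝ] Module.Dual ℝ g) : Prop where
  skewR : ∀ α β : Module.Dual ℝ g, α (R β) = -β (R α)
  skewσ : ∀ u v : g, σ u v = -σ v u
  c0a : J ∘ₗ J + R ∘ₗ σ = -LinearMap.id
  c0b : J ∘ₗ R = R ∘ₗ J.dualMap
  c0c : σ ∘ₗ J = J.dualMap ∘ₗ σ
  c1 : ∀ α β γ : Module.Dual ℝ g, α ⁅R β, R γ⁆ + β ⁅R γ, R α⁆ + γ ⁅R α, R β⁆ = 0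
  c2 : ∀ α β : Module.Dual ℝ g,
    J.dualMap (coad (R α) β - coad (R β) α)
      = coad (R α) (J.dualMap β) - coad (R β) (J.dualMap α)
  c3 : ∀ u v : g, ⁅J u, J v⁆ - J ⁅J u, v⁆ - J ⁅u, J v⁆ + J (J ⁅u, v⁆) = R (dSigma σ u v)
  c4 : ∀ u v w : g, dForm (fun a b => σ (J a) b) u v w =
    dForm (fun a b => σ a b) (J u) v w + dForm (fun a b => σ a b) u (J v) w +
      dForm (fun a b => σ a b) u v (J w)

/-- The endomorphism of `g ⊕ g*` associated to a triple `(J, R, σ)`. -/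
noncomputable def Kmap (J : g →ₗ[ℝ] g) (R : Module.Dual ℝ g →ₗ[ℝ] g)
    (σ : g →ₗ[ℝ] Module.Dual ℝ g) (a : g × Module.Dual ℝ g) : g × Module.Dual ℝ g :=
  (J a.1 + R a.2, σ a.1 - J.dualMap a.2)

/-- A generalized Kähler structure on a Lie algebra `g`. -/
structure IsGK (J₁ : g →ₗ[ℝ] g) (R₁ : Module.Dual ℝ g →ₗ[ℝ] g)
    (σ₁ : g →ₗ[ℝ] Module.Dual ℝ g) (J₂ : g →ₗ[ℝ] g) (R₂ : Module.Dual ℝ g →ₗ[ℝ] g)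
    (σ₂ : g →ₗ[ℝ] Module.Dual ℝ g) : Prop where
  gcs₁ : IsGCS J₁ R₁ σ₁
  gcs₂ : IsGCS J₂ R₂ σ₂
  comm : ∀ x : g × Module.Dual ℝ g,
    Kmap J₁ R₁ σ₁ (Kmap J₂ R₂ σ₂ x) = Kmap J₂ R₂ σ₂ (Kmap J₁ R₁ σ₁ x)
  symm : ∀ x y : g × Module.Dual ℝ g,
    pairing (Kmap J₁ R₁ σ₁ (Kmap J₂ R₂ σ₂ x)) y = pairing (Kmap J₁ R₁ σ₁ (Kmap J₂ R₂ σ₂ y)) x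
  posdef : ∀ x : g × Module.Dual ℝ g, x ≠ 0 → 0 < pairing (Kmap J₁ R₁ σ₁ (Kmap J₂ R₂ σ₂ x)) x


section GKAux

variable (J : g →ₗ[ℝ] g) (R : Module.Dual ℝ g →ₗ[ℝ] g) (σ : g →ₗ[ℝ] Module.Dual ℝ g)

lemma GK_coad_add_left (u v : g) (α : Module.Dual ℝ g) :
    coad (u + v) α = coad u α + coad v α := by
  ext w; simp [coad, add_lie]; ring

lemma GK_coad_add_right (u : g) (α β : Module.Dual ℝ g) :
    coad u (α + β) = coad u α + coad u β := by
  ext w; simp [coad]; ring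

/-- The Nijenhuis-type expression for `Kmap`. -/
noncomputable def NK (a b : g × Module.Dual ℝ g) : g × Module.Dual ℝ g :=
  dbracket (Kmap J R σ a) (Kmap J R σ b)
    - Kmap J R σ (dbracket (Kmap J R σ a) b)
    - Kmap J R σ (dbracket a (Kmap J R σ b))
    + Kmap J R σ (Kmap J R σ (dbracket a b))

lemma GK_Kmap_add (a b : g × Module.Dual ℝ g) :
    Kmap J R σ (a + b) = Kmap J R σ a + Kmap J R σ b := by
  simp only [Kmap, Prod.fst_add, Prod.snd_add, map_add, Prod.mk_add_mk, Prod.mk.injEq]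
  constructor <;> abel

lemma GK_Kmap_neg (a : g × Module.Dual ℝ g) : Kmap J R σ (-a) = -Kmap J R σ a := by
  simp only [Kmap, Prod.fst_neg, Prod.snd_neg, map_neg, Prod.neg_mk, Prod.mk.injEq]
  constructor <;> abel

lemma GK_dbracket_add_left (a b c : g × Module.Dual ℝ g) :
    dbracket (a + b) c = dbracket a c + dbracket b c := by
  simp only [dbracket, Prod.fst_add, Prod.snd_add, add_lie, GK_coad_add_left,
    GK_coad_add_right, Prod.mk_add_mk, Prod.mk.injEq]
  exact ⟨trivial, by abel⟩

lemma GK_dbracket_skew (a b : g × Module.Dual ℝ g) : dbracket a b = -dbracket b a := by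
  simp only [dbracket, Prod.neg_mk, Prod.mk.injEq]
  constructor
  · rw [← lie_skew]
  · abel

lemma GK_dbracket_add_right (a b c : g × Module.Dual ℝ g) :
    dbracket a (b + c) = dbracket a b + dbracket a c := by
  rw [GK_dbracket_skew, GK_dbracket_add_left, GK_dbracket_skew a b, GK_dbracket_skew a c]; abel

lemma GK_NK_add_left (a b c : g × Module.Dual ℝ g) :
    NK J R σ (a + b) c = NK J R σ a c + NK J R σ b c := by
  simp only [NK, GK_Kmap_add, GK_dbracket_add_left]
  abel

lemma GK_NK_skew (a b : g × Module.Dual ℝ g) : NK J R σ a b = -NK J R σ b a := by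
  simp only [NK, GK_dbracket_skew a b, GK_dbracket_skew (Kmap J R σ a), GK_Kmap_neg,
    GK_dbracket_skew a (Kmap J R σ b)]
  abel

lemma GK_NK_add_right (a b c : g × Module.Dual ℝ g) :
    NK J R σ a (b + c) = NK J R σ a b + NK J R σ a c := by
  rw [GK_NK_skew, GK_NK_add_left, GK_NK_skew J R σ b a, GK_NK_skew J R σ c a]; abel

lemma GK_NK_dd
    (hR : ∀ α β : Module.Dual ℝ g, α (R β) = -β (R α))
    (c1 : ∀ α β γ : Module.Dual ℝ g, α ⁅R β, R γ⁆ + β ⁅R γ, R α⁆ + γ ⁅R α, R β⁆ = 0)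
    (c2 : ∀ α β : Module.Dual ℝ g,
      J.dualMap (coad (R α) β - coad (R β) α)
        = coad (R α) (J.dualMap β) - coad (R β) (J.dualMap α))
    (α β : Module.Dual ℝ g) : NK J R σ (0, α) (0, β) = 0 := by
  have hc2 := c2 α β
  simp only [coad, map_sub, map_neg, LinearMap.neg_comp] at hc2
  simp only [NK, Kmap, dbracket, coad, map_zero, LinearMap.comp_zero,
    LinearMap.zero_comp, map_add, map_sub, map_neg, zero_lie, lie_zero, zero_add, add_zero,
    sub_zero, zero_sub, neg_zero, neg_neg, Prod.fst_zero, Prod.snd_zero,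
    Prod.fst_sub, Prod.snd_sub, Prod.fst_add, Prod.snd_add, Prod.fst_neg, Prod.snd_neg,
    Prod.ext_iff, LinearMap.neg_comp]
  constructor
  · rw [← Module.forall_dual_apply_eq_zero_iff ℝ]
    intro γ
    simp only [map_add, map_sub, map_neg]
    rw [hR γ (β ∘ₗ (LieAlgebra.ad ℝ g) (R α)), hR γ (α ∘ₗ (LieAlgebra.ad ℝ g) (R β))]
    simp only [LinearMap.comp_apply, LieAlgebra.ad_apply]
    have hs : β ⁅R γ, R α⁆ = -β ⁅R α, R γ⁆ := by rw [← lie_skew (R α) (R γ), map_neg, neg_neg]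
    linarith [c1 α β γ, hs]
  · linear_combination (norm := module) hc2

lemma GK_NK_pp
    (hσ : ∀ u v : g, σ u v = -σ v u)
    (hc : ∀ x y : g, σ (J x) y = σ x (J y))
    (c3 : ∀ u v : g, ⁅J u, J v⁆ - J ⁅J u, v⁆ - J ⁅u, J v⁆ + J (J ⁅u, v⁆) = R (dSigma σ u v))
    (c4 : ∀ u v w : g, dForm (fun a b => σ (J a) b) u v w =
      dForm (fun a b => σ a b) (J u) v w + dForm (fun a b => σ a b) u (J v) w +
        dForm (fun a b => σ a b) u v (J w))
    (u v : g) : NK J R σ (u, 0) (v, 0) = 0 := by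
  have h3 := c3 u v
  rw [show dSigma σ u v = -σ ⁅u, v⁆ + coad u (σ v) - coad v (σ u) by
    ext w; simp [dSigma, coad, hσ ⁅u,w⁆ v, hσ ⁅v,w⁆ u]] at h3
  simp only [coad, map_sub, map_neg, map_add, LinearMap.neg_comp] at h3
  simp only [NK, Kmap, dbracket, coad, map_zero, LinearMap.comp_zero,
    LinearMap.zero_comp, map_add, map_sub, map_neg, zero_lie, lie_zero, zero_add, add_zero,
    sub_zero, zero_sub, neg_zero, neg_neg, Prod.fst_zero, Prod.snd_zero,
    Prod.fst_sub, Prod.snd_sub, Prod.fst_add, Prod.snd_add, Prod.fst_neg, Prod.snd_neg,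
    Prod.ext_iff, LinearMap.neg_comp]
  constructor
  · linear_combination (norm := module) h3
  · ext w
    have h4 := c4 u v w
    simp only [dForm] at h4
    simp only [LinearMap.sub_apply, LinearMap.add_apply, LinearMap.neg_apply,
      LinearMap.comp_apply, LieAlgebra.ad_apply, LinearMap.dualMap_apply, LinearMap.zero_apply]
    linarith [h4, hc ⁅u,w⁆ v, hc ⁅v,w⁆ u, hσ ⁅J u,w⁆ v, hσ ⁅J v,w⁆ u, hσ ⁅u,J w⁆ v,
      hσ ⁅v,J w⁆ u]

lemma GK_NK_pd
    (hR : ∀ α β : Module.Dual ℝ g, α (R β) = -β (R α))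
    (hσ : ∀ u v : g, σ u v = -σ v u)
    (hb : ∀ φ : Module.Dual ℝ g, J (R φ) = R (J.dualMap φ))
    (ha : ∀ x : g, J (J x) + R (σ x) = -x)
    (hd : ∀ φ : Module.Dual ℝ g, σ (R φ) + J.dualMap (J.dualMap φ) = -φ)
    (c2 : ∀ α β : Module.Dual ℝ g,
      J.dualMap (coad (R α) β - coad (R β) α)
        = coad (R α) (J.dualMap β) - coad (R β) (J.dualMap α))
    (c3 : ∀ u v : g, ⁅J u, J v⁆ - J ⁅J u, v⁆ - J ⁅u, J v⁆ + J (J ⁅u, v⁆) = R (dSigma σ u v))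
    (u : g) (β : Module.Dual ℝ g) : NK J R σ (u, 0) (0, β) = 0 := by
  simp only [NK, Kmap, dbracket, coad, map_zero, LinearMap.comp_zero,
    LinearMap.zero_comp, map_add, map_sub, map_neg, zero_lie, lie_zero, zero_add, add_zero,
    sub_zero, zero_sub, neg_zero, neg_neg, Prod.fst_zero, Prod.snd_zero,
    Prod.fst_sub, Prod.snd_sub, Prod.fst_add, Prod.snd_add, Prod.fst_neg, Prod.snd_neg,
    Prod.ext_iff, LinearMap.neg_comp]
  have lsk : ∀ (φ : Module.Dual ℝ g) (x y : g), φ ⁅x,y⁆ = -φ ⁅y,x⁆ := fun φ x y => by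
    rw [← lie_skew x y, map_neg]
  have lskJ : ∀ (φ : Module.Dual ℝ g) (x y : g), φ (J ⁅x,y⁆) = -φ (J ⁅y,x⁆) := fun φ x y => by
    rw [← lie_skew x y, map_neg J, map_neg φ]
  constructor
  · rw [← Module.forall_dual_apply_eq_zero_iff ℝ]
    intro γ
    have hc2 := congrArg (fun φ : Module.Dual ℝ g => φ u) (c2 γ β)
    simp only [coad, map_sub, map_neg, LinearMap.neg_comp, LinearMap.sub_apply,
      LinearMap.neg_apply, LinearMap.comp_apply, LieAlgebra.ad_apply,
      LinearMap.dualMap_apply] at hc2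
    simp only [map_add, map_sub, map_neg]
    rw [hb (β ∘ₗ (LieAlgebra.ad ℝ g) u)]
    rw [hR γ (β ∘ₗ (LieAlgebra.ad ℝ g) (J u)), hR γ (J.dualMap β ∘ₗ (LieAlgebra.ad ℝ g) u),
      hR γ (J.dualMap (β ∘ₗ (LieAlgebra.ad ℝ g) u))]
    simp only [LinearMap.comp_apply, LieAlgebra.ad_apply, LinearMap.dualMap_apply]
    linarith [hc2, lsk β (R γ) (J u), lsk γ (R β) (J u), lskJ β (R γ) u, lskJ γ (R β) u]
  · ext w
    have h3 := congrArg β (c3 u w)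
    rw [hR β (dSigma σ u w)] at h3
    simp only [map_add, map_sub, map_neg, dSigma, LinearMap.sub_apply, LinearMap.add_apply,
      LinearMap.neg_apply, LinearMap.comp_apply, LieAlgebra.ad_apply, LinearMap.flip_apply] at h3
    have ha' := congrArg β (ha ⁅u, w⁆)
    simp only [map_add, map_neg] at ha'
    have hrs := hR β (σ ⁅u, w⁆)
    have hd' := congrArg (fun φ : Module.Dual ℝ g => φ w) (hd (β ∘ₗ (LieAlgebra.ad ℝ g) u))
    simp only [LinearMap.add_apply, LinearMap.neg_apply, LinearMap.dualMap_apply,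
      LinearMap.comp_apply, LieAlgebra.ad_apply] at hd'
    simp only [LinearMap.sub_apply, LinearMap.add_apply, LinearMap.neg_apply,
      LinearMap.comp_apply, LieAlgebra.ad_apply, LinearMap.dualMap_apply, LinearMap.zero_apply]
    linarith [h3, ha', hrs, hd', hσ ⁅w, R β⁆ u, lsk (σ u) w (R β)]

end GKAux

/-- `K ∘ K = -id` and `N_K = 0` iff `(J, R, σ)` satisfies (C0)-(C4). -/
theorem Kmap_integrable_iff (J : g →ₗ[ℝ] g) (R : Module.Dual ℝ g →ₗ[ℝ] g)
    (σ : g →ₗ[ℝ] Module.Dual ℝ g)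
    (hR : ∀ α β : Module.Dual ℝ g, α (R β) = -β (R α))
    (hσ : ∀ u v : g, σ u v = -σ v u) :
    ((∀ a : g × Module.Dual ℝ g, Kmap J R σ (Kmap J R σ a) = -a) ∧
      (∀ a b : g × Module.Dual ℝ g,
        dbracket (Kmap J R σ a) (Kmap J R σ b)
          - Kmap J R σ (dbracket (Kmap J R σ a) b)
          - Kmap J R σ (dbracket a (Kmap J R σ b))
          + Kmap J R σ (Kmap J R σ (dbracket a b)) = 0)) ↔
    ((J ∘ₗ J + R ∘ₗ σ = -LinearMap.id) ∧ (J ∘ₗ R = R ∘ₗ J.dualMap) ∧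
      (σ ∘ₗ J = J.dualMap ∘ₗ σ) ∧
      (∀ α β γ : Module.Dual ℝ g, α ⁅R β, R γ⁆ + β ⁅R γ, R α⁆ + γ ⁅R α, R β⁆ = 0) ∧
      (∀ α β : Module.Dual ℝ g,
        J.dualMap (coad (R α) β - coad (R β) α)
          = coad (R α) (J.dualMap β) - coad (R β) (J.dualMap α)) ∧
      (∀ u v : g, ⁅J u, J v⁆ - J ⁅J u, v⁆ - J ⁅u, J v⁆ + J (J ⁅u, v⁆) = R (dSigma σ u v)) ∧
      (∀ u v w : g, dForm (fun a b => σ (J a) b) u v w =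
        dForm (fun a b => σ a b) (J u) v w + dForm (fun a b => σ a b) u (J v) w +
          dForm (fun a b => σ a b) u v (J w))) := by
  constructor
  · rintro ⟨h2, hN⟩
    have c0a : J ∘ₗ J + R ∘ₗ σ = -LinearMap.id := by
      ext u
      have := congrArg Prod.fst (h2 (u, 0))
      simpa [Kmap] using this
    have c0b : J ∘ₗ R = R ∘ₗ J.dualMap := by
      ext α
      have := congrArg Prod.fst (h2 (0, α))
      simp [Kmap] at this
      rw [add_neg_eq_zero] at this
      exact this
    have c0c : σ ∘ₗ J = J.dualMap ∘ₗ σ := by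
      ext u y
      have := congrArg Prod.snd (h2 (u, 0))
      simp [Kmap] at this
      rw [sub_eq_zero] at this
      simp only [LinearMap.comp_apply, this]
    have hc : ∀ x y : g, σ (J x) y = σ x (J y) := fun x y => by
      simpa using LinearMap.congr_fun (LinearMap.congr_fun c0c x) y
    refine ⟨c0a, c0b, c0c, ?_, ?_, ?_, ?_⟩
    · intro α β γ
      have h := congrArg Prod.fst (hN (0, α) (0, β))
      simp [Kmap, dbracket, coad, Prod.ext_iff] at h
      have h2' := congrArg γ h
      simp only [map_add, map_sub, map_zero] at h2'
      rw [hR γ (β ∘ₗ (LieAlgebra.ad ℝ g) (R α)), hR γ (α ∘ₗ (LieAlgebra.ad ℝ g) (R β))] at h2'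
      simp only [LinearMap.comp_apply, LieAlgebra.ad_apply] at h2'
      have hs : β ⁅R γ, R α⁆ = -β ⁅R α, R γ⁆ := by
        rw [← lie_skew (R α) (R γ), map_neg, neg_neg]
      linarith [h2', hs]
    · intro α β
      have h := congrArg Prod.snd (hN (0, α) (0, β))
      simp [Kmap, dbracket, coad] at h
      ext w
      have h2' := congrArg (fun φ : Module.Dual ℝ g => φ w) h
      simp [coad] at h2' ⊢
      linarith [h2']
    · intro u v
      have h := congrArg Prod.fst (hN (u, 0) (v, 0))
      simp [Kmap, dbracket, coad] at h
      rw [show dSigma σ u v = -σ ⁅u, v⁆ + coad u (σ v) - coad v (σ u) by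
        ext w; simp [dSigma, coad, hσ ⁅u,w⁆ v, hσ ⁅v,w⁆ u]]
      simp only [coad, map_add, map_sub, map_neg]
      linear_combination (norm := module) h
    · intro u v w
      have h := congrArg Prod.snd (hN (u, 0) (v, 0))
      simp [Kmap, dbracket, coad] at h
      have h2' := congrArg (fun φ : Module.Dual ℝ g => φ w) h
      simp [dForm] at h2' ⊢
      linarith [h2', hc ⁅u,w⁆ v, hc ⁅v,w⁆ u, hσ ⁅J u,w⁆ v, hσ ⁅J v,w⁆ u, hσ ⁅u,J w⁆ v,
        hσ ⁅v,J w⁆ u]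
  · rintro ⟨c0a, c0b, c0c, c1, c2, c3, c4⟩
    have ha : ∀ x : g, J (J x) + R (σ x) = -x := fun x => LinearMap.congr_fun c0a x
    have hb : ∀ φ : Module.Dual ℝ g, J (R φ) = R (J.dualMap φ) := fun φ =>
      LinearMap.congr_fun c0b φ
    have hc : ∀ x y : g, σ (J x) y = σ x (J y) := fun x y => by
      simpa using LinearMap.congr_fun (LinearMap.congr_fun c0c x) y
    have hd : ∀ φ : Module.Dual ℝ g, σ (R φ) + J.dualMap (J.dualMap φ) = -φ := by
      intro φ; ext v
      simp only [LinearMap.add_apply, LinearMap.neg_apply, LinearMap.dualMap_apply]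
      have h1 := congrArg φ (ha v)
      simp only [map_add, map_neg] at h1
      have h2 : (σ (R φ)) v = φ (R (σ v)) := by rw [hσ (R φ) v, hR φ (σ v)]
      linarith [h1, h2]
    constructor
    · intro a
      obtain ⟨u, α⟩ := a
      simp only [Kmap, Prod.mk.injEq, Prod.neg_mk, map_add, map_sub]
      constructor
      · linear_combination (norm := module) ha u + hb α
      · have hcc : σ (J u) = J.dualMap (σ u) := LinearMap.congr_fun c0c u
        linear_combination (norm := module) hcc + hd α
    · intro a b
      show NK J R σ a b = 0
      obtain ⟨u, α⟩ := a
      obtain ⟨v, β⟩ := b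
      have e1 : ((u, α) : g × Module.Dual ℝ g) = (u, 0) + (0, α) := by
        simp [Prod.ext_iff]
      have e2 : ((v, β) : g × Module.Dual ℝ g) = (v, 0) + (0, β) := by
        simp [Prod.ext_iff]
      rw [e1, e2, GK_NK_add_left, GK_NK_add_right, GK_NK_add_right,
        GK_NK_pp J R σ hσ hc c3 c4 u v,
        GK_NK_pd J R σ hR hσ hb ha hd c2 c3 u β,
        GK_NK_dd J R σ hR c1 c2 α β,
        GK_NK_skew J R σ (0, α) (v, 0), GK_NK_pd J R σ hR hσ hb ha hd c2 c3 v α]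
      simp
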